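/- In the uniform recursive tree U_g with branching parameter f ≥ 1, the resistance distance of the central node (the sum of resistance distances from the central node to all nodes) equals r_{{0}}(g) = g·f·(f+1)^{g−1}. -/

import Mathlib

open Matrix BigOperators

/-- The vertices of the uniform recursive tree `U_g` with branching parameter `f`:
`U_0` is a single node (the central node), and at each iteration every existing
node receives `f` new leaf children. -/
def URTV (f : ℕ) : ℕ → Type
  | 0 => Unit
  | g + 1 => URTV f g ⊕ (URTV f g × Fin f)

instance urtFintype (f : ℕ) : ∀ g, Fintype (URTV f g)
  | 0 => inferInstanceAs (Fintype Unit)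
  | g + 1 =>
    letI := urtFintype f g
    inferInstanceAs (Fintype (URTV f g ⊕ (URTV f g × Fin f)))

instance urtDecEq (f : ℕ) : ∀ g, DecidableEq (URTV f g)
  | 0 => inferInstanceAs (DecidableEq Unit)
  | g + 1 =>
    letI := urtDecEq f g
    inferInstanceAs (DecidableEq (URTV f g ⊕ (URTV f g × Fin f)))

/-- The adjacency relation of `U_g`: each new leaf is joined to the node it was
attached to. -/
def urtRel (f : ℕ) : ∀ g, URTV f g → URTV f g → Prop
  | 0, _, _ => False
  | g + 1, Sum.inl x, Sum.inl y => urtRel f g x y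
  | _ + 1, Sum.inl x, Sum.inr (y, _) => x = y
  | _ + 1, Sum.inr (x, _), Sum.inl y => x = y
  | _ + 1, Sum.inr _, Sum.inr _ => False

/-- The uniform recursive tree `U_g` as a simple graph. -/
def urtGraph (f g : ℕ) : SimpleGraph (URTV f g) :=
  SimpleGraph.fromRel (urtRel f g)

/-- The central node of `U_g`. -/
def urtCenter (f : ℕ) : ∀ g, URTV f g
  | 0 => ()
  | g + 1 => Sum.inl (urtCenter f g)

/-- The label `{0, i_1, …, i_n}` of a node of `U_g`: the increasing list of levels
(creation iterations) of the nodes on the unique path from the central node to the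
node.  The central node has label `[0]`; a node created at iteration `g+1` appends
`g+1` to the label of the node it was attached to. -/
def urtLabel (f : ℕ) : ∀ g, URTV f g → List ℕ
  | 0, _ => [0]
  | g + 1, Sum.inl x => urtLabel f g x
  | g + 1, Sum.inr (x, _) => urtLabel f g x ++ [g + 1]

/-- The all-ones matrix `J`. -/
def JMat (V : Type*) : Matrix V V ℝ := Matrix.of fun _ _ => (1 : ℝ)

/-- The Laplacian matrix (over `ℝ`) of a simple graph (all edge weights `1`). -/
noncomputable def glap {V : Type*} [Fintype V] (G : SimpleGraph V) : Matrix V V ℝ := by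
  classical exact SimpleGraph.lapMatrix ℝ G

/-- The pseudoinverse `L† = (L + (1/N)·J)⁻¹ - (1/N)·J` of the graph Laplacian. -/
noncomputable def gdag {V : Type*} [Fintype V] [DecidableEq V] (G : SimpleGraph V) :
    Matrix V V ℝ :=
  (glap G + ((Fintype.card V : ℝ))⁻¹ • JMat V)⁻¹ - ((Fintype.card V : ℝ))⁻¹ • JMat V

/-- depth of a node -/
def urtDepth (f : ℕ) : ∀ g, URTV f g → ℕ
  | 0, _ => 0
  | g + 1, Sum.inl x => urtDepth f g x
  | g + 1, Sum.inr (x, _) => urtDepth f g x + 1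

lemma urtDepth_center (f : ℕ) : ∀ g, urtDepth f g (urtCenter f g) = 0
  | 0 => rfl
  | g + 1 => urtDepth_center f g

lemma adj_step (f : ℕ) : ∀ g (u v : URTV f g), (urtGraph f g).Adj u v →
    urtDepth f g u + 1 = urtDepth f g v ∨ urtDepth f g v + 1 = urtDepth f g u := by
  intro g
  induction g with
  | zero => intro u v h; exact absurd h.2 (by simp [urtRel])
  | succ g ih =>
    rintro (x | ⟨x, i⟩) (y | ⟨y, j⟩) ⟨hne, h⟩
    · have : (urtGraph f g).Adj x y := by
        refine ⟨fun he => hne (by rw [he]), ?_⟩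
        exact h
      simpa [urtDepth] using ih x y this
    · rcases h with h | h <;> simp [urtRel] at h <;> subst h <;>
        simp [urtDepth]
    · rcases h with h | h <;> simp [urtRel] at h <;> subst h <;>
        simp [urtDepth]
    · rcases h with h | h <;> simp [urtRel] at h

lemma adj_inl (f g : ℕ) {u v : URTV f g} (h : (urtGraph f g).Adj u v) :
    (urtGraph f (g + 1)).Adj (Sum.inl u) (Sum.inl v) := by
  refine ⟨fun he => h.1 (by injection he), ?_⟩
  rcases h.2 with h2 | h2
  · exact Or.inl h2
  · exact Or.inr h2

lemma adj_leaf (f g : ℕ) (x : URTV f g) (i : Fin f) :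
    (urtGraph f (g + 1)).Adj (Sum.inl x) (Sum.inr (x, i)) := by
  refine ⟨by exact Sum.inl_ne_inr, Or.inl rfl⟩

lemma exists_walk (f : ℕ) : ∀ g (v : URTV f g),
    ∃ p : (urtGraph f g).Walk (urtCenter f g) v, p.length = urtDepth f g v := by
  intro g
  induction g with
  | zero => intro v; exact ⟨SimpleGraph.Walk.nil, rfl⟩
  | succ g ih =>
    rintro (x | ⟨x, i⟩)
    · obtain ⟨p, hp⟩ := ih x
      exact ⟨p.map ⟨Sum.inl, adj_inl f g⟩, (SimpleGraph.Walk.length_map _ _).trans hp⟩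
    · obtain ⟨p, hp⟩ := ih x
      refine ⟨(p.map ⟨Sum.inl, adj_inl f g⟩).concat (adj_leaf f g x i), ?_⟩
      exact (SimpleGraph.Walk.length_concat _ _).trans
        (congrArg (· + 1) ((SimpleGraph.Walk.length_map _ _).trans hp))

lemma depth_le_walk (f g : ℕ) : ∀ {u v : URTV f g} (p : (urtGraph f g).Walk u v),
    urtDepth f g v ≤ urtDepth f g u + p.length := by
  intro u v p
  induction p with
  | nil => simp
  | @cons a b c h q ih =>
    have := adj_step f g a b h
    simp only [SimpleGraph.Walk.length_cons]
    omega

lemma dist_eq_depth (f g : ℕ) (v : URTV f g) :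
    (urtGraph f g).dist (urtCenter f g) v = urtDepth f g v := by
  obtain ⟨p, hp⟩ := exists_walk f g v
  refine le_antisymm (hp ▸ SimpleGraph.dist_le p) ?_
  have hr : (urtGraph f g).Reachable (urtCenter f g) v := ⟨p⟩
  obtain ⟨q, hq⟩ := hr.exists_walk_length_eq_dist
  have := depth_le_walk f g q
  rw [hq, urtDepth_center] at this
  omega

lemma card_urt (f : ℕ) : ∀ g, Fintype.card (URTV f g) = (f + 1) ^ g
  | 0 => rfl
  | g + 1 => by
    have h1 : Fintype.card (URTV f (g + 1)) =
        Fintype.card (URTV f g ⊕ (URTV f g × Fin f)) := Fintype.card_congr (Equiv.refl _)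
    rw [h1, Fintype.card_sum, Fintype.card_prod, Fintype.card_fin, card_urt f g]
    ring

lemma sum_depth (f : ℕ) : ∀ g, ∑ y : URTV f g, urtDepth f g y = g * f * (f + 1) ^ (g - 1)
  | 0 => by simp [urtDepth]
  | g + 1 => by
    have h1 : ∑ y : URTV f (g + 1), urtDepth f (g + 1) y =
        ∑ y : URTV f g ⊕ (URTV f g × Fin f), urtDepth f (g + 1) y :=
      Fintype.sum_equiv (Equiv.refl _) _ _ (fun _ => rfl)
    rw [h1]
    erw [Fintype.sum_sum_type]
    have h2 : ∀ x : URTV f g, urtDepth f (g + 1) (Sum.inl x) = urtDepth f g x := fun _ => rfl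
    have h3 : ∀ (x : URTV f g) (i : Fin f),
        urtDepth f (g + 1) (Sum.inr (x, i)) = urtDepth f g x + 1 := fun _ _ => rfl
    simp only [h2, h3, Fintype.sum_prod_type, Finset.sum_const, Finset.card_univ,
      Fintype.card_fin, smul_eq_mul]
    have hS := sum_depth f g
    have hc := card_urt f g
    have h4 : ∀ x : URTV f g, f * (urtDepth f g x + 1) = f * urtDepth f g x + f := by
      intro x; ring
    simp only [h4]
    rw [Finset.sum_add_distrib, ← Finset.mul_sum, Finset.sum_const, Finset.card_univ, hc, hS,
      smul_eq_mul]
    cases g with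
    | zero => simp
    | succ k =>
      simp only [Nat.add_sub_cancel]
      rw [pow_succ]
      ring

/-- In the uniform recursive tree `U_g` with branching parameter `f ≥ 1`, the
resistance distance of the central node (the sum of resistance distances from the
central node to all nodes; since `U_g` is a tree, resistance distance coincides
with shortest-path distance) equals `g·f·(f+1)^{g-1}`. -/
theorem stmt_16 (f : ℕ) (hf : 1 ≤ f) (g : ℕ) :
    ∑ y : URTV f g, (urtGraph f g).dist (urtCenter f g) y =
      g * f * (f + 1) ^ (g - 1) := by
  have h : ∀ y, (urtGraph f g).dist (urtCenter f g) y = urtDepth f g y :=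
    dist_eq_depth f g
  simp only [h]
  exact sum_depth f g
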